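/- Let L be a random variable taking values in (0,1], and let X be a random variable such that conditionally on L, X follows a geometric distribution with success parameter L (supported on {1,2,3,...} with P(X=n|L) = L(1-L)^{n-1}). Then for any real k > 0, E[X^k] = ∞ if and only if E[L^{-k}] = ∞. -/

import Mathlib

open MeasureTheory

section AuxGeom

open Real

private lemma aux_rpow_exp' {k a x : ℝ} (hk : 0 < k) (ha : 0 < a) (hx : 0 ≤ x) :
    x ^ k * Real.exp (-(a * x)) ≤ (k / (Real.exp 1 * a)) ^ k := by
  rcases hx.eq_or_lt with h | h
  · rw [← h, Real.zero_rpow hk.ne', zero_mul]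
    positivity
  · have hpos : 0 < k / (Real.exp 1 * a) := by positivity
    have h1 : Real.log (a * x / k) ≤ a * x / k - 1 := Real.log_le_sub_one_of_pos (by positivity)
    have hlog : Real.log (a * x / k) = Real.log a + Real.log x - Real.log k := by
      rw [Real.log_div (by positivity) hk.ne', Real.log_mul ha.ne' h.ne']
    have hlog2 : Real.log (k / (Real.exp 1 * a)) = Real.log k - 1 - Real.log a := by
      rw [Real.log_div hk.ne' (by positivity), Real.log_mul (Real.exp_pos 1).ne' ha.ne',
        Real.log_exp]
      ring
    rw [Real.rpow_def_of_pos h, Real.rpow_def_of_pos hpos, ← Real.exp_add]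
    apply Real.exp_le_exp.mpr
    rw [hlog2]
    rw [hlog] at h1
    have h2 := mul_le_mul_of_nonneg_left h1 hk.le
    have hka : k * (a * x / k) = a * x := by field_simp
    nlinarith [h2]

private lemma aux_exp_le' {x : ℝ} (hx : 0 ≤ x) : Real.exp (-x) ≤ 1 / (1 + x) := by
  rw [div_eq_inv_mul, mul_one, ← Real.exp_log (by positivity : (0:ℝ) < 1 + x), ← Real.exp_neg]
  apply Real.exp_le_exp.mpr
  have h2 := Real.log_le_sub_one_of_pos (show (0:ℝ) < 1 + x by positivity)
  linarith

private lemma aux_one_sub' {l : ℝ} (h0 : 0 < l) (h2 : l ≤ 1/2) : Real.exp (-(2*l)) ≤ 1 - l := by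
  have := aux_exp_le' (show (0:ℝ) ≤ 2*l by positivity)
  have h3 : 1 / (1 + 2*l) ≤ 1 - l := by
    rw [div_le_iff₀ (by positivity)]
    nlinarith
  linarith

private lemma aux_one_sub_exp' {l : ℝ} (h0 : 0 < l) (h1 : l ≤ 1) :
    l / 3 ≤ 1 - Real.exp (-(l/2)) := by
  have := aux_exp_le' (show (0:ℝ) ≤ l/2 by positivity)
  have h3 : 1 / (1 + l/2) ≤ 1 - l/3 := by
    rw [div_le_iff₀ (by positivity)]
    nlinarith
  linarith

/-- The `n`-th term of the expansion of `E[X^k | L = l]`. -/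
noncomputable def geomTerm' (k l : ℝ) (n : ℕ) : ℝ := (n:ℝ)^k * (l * (1-l)^(n-1))

private lemma geom_upper' {k : ℝ} (hk : 0 < k) :
    ∃ C : ℝ, 0 < C ∧ ∀ l ∈ Set.Ioc (0:ℝ) 1,
      (∑' n : ℕ, ENNReal.ofReal (geomTerm' k l n)) ≤ ENNReal.ofReal (C * l^(-k)) := by
  refine ⟨3 * Real.exp 1 * (2*k/Real.exp 1)^k, by positivity, fun l hl => ?_⟩
  obtain ⟨h0, h1⟩ := hl
  set r : ℝ := Real.exp (-(l/2)) with hr_def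
  have hr0 : 0 ≤ r := (Real.exp_pos _).le
  have hr1 : r < 1 := Real.exp_lt_one_iff.mpr (by linarith)
  set M : ℝ := (k / (Real.exp 1 * (l/2)))^k with hM_def
  have hM0 : 0 ≤ M := Real.rpow_nonneg (by positivity) _
  have hbound : ∀ n : ℕ, geomTerm' k l n ≤ (l * Real.exp 1 * M) * r ^ n := by
    intro n
    rcases Nat.eq_zero_or_pos n with rfl | hn
    · simp [geomTerm', Real.zero_rpow hk.ne']
      positivity
    · have hcast : ((n - 1 : ℕ) : ℝ) = (n:ℝ) - 1 := by
        push_cast [Nat.cast_sub hn]; ring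
      have e1 : (1-l)^(n-1) ≤ Real.exp (((n:ℝ)-1) * (-l)) := by
        calc (1-l)^(n-1) ≤ (Real.exp (-l))^(n-1) := by
              apply pow_le_pow_left₀ (by linarith)
              have := Real.add_one_le_exp (-l); linarith
          _ = Real.exp (((n-1:ℕ):ℝ) * (-l)) := (Real.exp_nat_mul _ _).symm
          _ = Real.exp (((n:ℝ)-1) * (-l)) := by rw [hcast]
      have e2 : Real.exp (((n:ℝ)-1) * (-l))
          = Real.exp l * (Real.exp (-(l/2 * n)) * Real.exp (-(l/2 * n))) := by
        rw [← Real.exp_add, ← Real.exp_add]; congr 1; ring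
      have hE : (n:ℝ)^k * Real.exp (-(l/2 * n)) ≤ M :=
        aux_rpow_exp' hk (by linarith) (Nat.cast_nonneg n)
      have hrn : r ^ n = Real.exp (-(l/2 * n)) := by
        rw [hr_def, ← Real.exp_nat_mul]; congr 1; ring
      have hnk : (0:ℝ) ≤ (n:ℝ)^k := Real.rpow_nonneg (Nat.cast_nonneg n) _
      calc geomTerm' k l n ≤ (n:ℝ)^k * (l * Real.exp (((n:ℝ)-1) * (-l))) := by
            unfold geomTerm'; gcongr
        _ = l * Real.exp l * (((n:ℝ)^k * Real.exp (-(l/2 * n))) * Real.exp (-(l/2 * n))) := by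
            rw [e2]; ring
        _ ≤ l * Real.exp 1 * (M * Real.exp (-(l/2 * n))) := by
            have he1 : Real.exp l ≤ Real.exp 1 := Real.exp_le_exp.mpr h1
            gcongr
        _ = (l * Real.exp 1 * M) * r ^ n := by rw [hrn]; ring
  have hsum : Summable (fun n : ℕ => (l * Real.exp 1 * M) * r ^ n) :=
    (summable_geometric_of_lt_one hr0 hr1).mul_left _
  calc (∑' n : ℕ, ENNReal.ofReal (geomTerm' k l n))
      ≤ ∑' n : ℕ, ENNReal.ofReal ((l * Real.exp 1 * M) * r ^ n) :=
        ENNReal.tsum_le_tsum fun n => ENNReal.ofReal_le_ofReal (hbound n)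
    _ = ENNReal.ofReal (∑' n : ℕ, (l * Real.exp 1 * M) * r ^ n) :=
        (ENNReal.ofReal_tsum_of_nonneg (fun n => by positivity) hsum).symm
    _ = ENNReal.ofReal ((l * Real.exp 1 * M) * (1 - r)⁻¹) := by
        rw [tsum_mul_left, tsum_geometric_of_lt_one hr0 hr1]
    _ ≤ ENNReal.ofReal (3 * Real.exp 1 * (2*k/Real.exp 1)^k * l^(-k)) := by
        apply ENNReal.ofReal_le_ofReal
        have h13 : l / 3 ≤ 1 - r := aux_one_sub_exp' h0 h1
        have hinv : (1 - r)⁻¹ ≤ (l/3)⁻¹ := by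
          apply inv_anti₀ (by positivity) h13
        have hMeq : M = (2*k/Real.exp 1)^k * l^(-k) := by
          rw [hM_def, show k / (Real.exp 1 * (l/2)) = (2*k/Real.exp 1) * l⁻¹ by
            field_simp,
            Real.mul_rpow (by positivity) (by positivity), Real.inv_rpow h0.le,
            ← Real.rpow_neg h0.le]
        calc (l * Real.exp 1 * M) * (1 - r)⁻¹ ≤ (l * Real.exp 1 * M) * (l/3)⁻¹ := by
              gcongr
          _ = 3 * Real.exp 1 * (2*k/Real.exp 1)^k * l^(-k) := by
              rw [hMeq]; field_simp

private lemma geom_lower' {k : ℝ} (hk : 0 < k) :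
    ∃ c : ℝ, 0 < c ∧ ∀ l ∈ Set.Ioc (0:ℝ) 1,
      ENNReal.ofReal (c * l^(-k)) ≤ ∑' n : ℕ, ENNReal.ofReal (geomTerm' k l n) := by
  refine ⟨min (Real.exp (-4)) ((2:ℝ)^(-k) / 2), by positivity, fun l hl => ?_⟩
  obtain ⟨h0, h1⟩ := hl
  rcases le_or_gt l (1/2) with hhalf | hhalf
  · set N : ℕ := ⌈l⁻¹⌉₊ with hN_def
    have hN1 : 1 ≤ N := Nat.one_le_ceil_iff.mpr (by positivity)
    have hNl : l⁻¹ ≤ (N:ℝ) := Nat.le_ceil _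
    have hNu : (N:ℝ) < l⁻¹ + 1 := Nat.ceil_lt_add_one (by positivity)
    have hterm : ∀ n ∈ Finset.Ico N (2*N),
        l^(-k) * (l * Real.exp (-4)) ≤ geomTerm' k l n := by
      intro n hn
      rw [Finset.mem_Ico] at hn
      obtain ⟨hnN, hn2N⟩ := hn
      have hn1 : 1 ≤ n := le_trans hN1 hnN
      have hcast : ((n - 1 : ℕ) : ℝ) = (n:ℝ) - 1 := by push_cast [Nat.cast_sub hn1]; ring
      have hnk : l^(-k) ≤ (n:ℝ)^k := by
        rw [Real.rpow_neg h0.le, ← Real.inv_rpow h0.le]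
        apply Real.rpow_le_rpow (by positivity) (hNl.trans (by exact_mod_cast hnN)) hk.le
      have hm2 : l * ((n:ℝ) - 1) ≤ 2 := by
        have hc2 : (n:ℝ) + 1 ≤ 2 * N := by exact_mod_cast hn2N
        have h3 : (n:ℝ) - 1 ≤ 2 * ((N:ℝ) - 1) := by linarith
        have h4 : (N:ℝ) - 1 < l⁻¹ := by linarith
        nlinarith [mul_le_mul_of_nonneg_left h3 h0.le, mul_lt_mul_of_pos_left h4 h0,
          mul_inv_cancel₀ h0.ne']
      have hpow : Real.exp (-4) ≤ (1-l)^(n-1) := by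
        calc Real.exp (-4) ≤ Real.exp (((n:ℝ)-1) * (-(2*l))) := by
              apply Real.exp_le_exp.mpr
              have hn1' : (1:ℝ) ≤ (n:ℝ) := by exact_mod_cast hn1
              nlinarith
          _ = (Real.exp (-(2*l)))^(n-1) := by
              rw [← Real.exp_nat_mul, hcast]
          _ ≤ (1-l)^(n-1) := pow_le_pow_left₀ (Real.exp_pos _).le (aux_one_sub' h0 hhalf) _
      calc l^(-k) * (l * Real.exp (-4)) ≤ (n:ℝ)^k * (l * (1-l)^(n-1)) := by
            apply mul_le_mul hnk _ (by positivity) (Real.rpow_nonneg (Nat.cast_nonneg n) _)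
            exact mul_le_mul_of_nonneg_left hpow h0.le
        _ = geomTerm' k l n := rfl
    have hcard : (Finset.Ico N (2*N)).card = N := by
      rw [Nat.card_Ico]; omega
    have hsumlb : Real.exp (-4) * l^(-k) ≤ ∑ n ∈ Finset.Ico N (2*N), geomTerm' k l n := by
      have h := Finset.card_nsmul_le_sum (Finset.Ico N (2*N)) (geomTerm' k l)
        (l^(-k) * (l * Real.exp (-4))) hterm
      rw [hcard, nsmul_eq_mul] at h
      refine le_trans ?_ h
      have hNlpos : 1 ≤ (N:ℝ) * l := by
        nlinarith [mul_le_mul_of_nonneg_right hNl h0.le, mul_inv_cancel₀ h0.ne']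
      have hlk : (0:ℝ) ≤ l^(-k) := Real.rpow_nonneg h0.le _
      have hmm := mul_le_mul_of_nonneg_right hNlpos
        (mul_nonneg hlk (Real.exp_pos (-4:ℝ)).le)
      calc Real.exp (-4) * l^(-k) = 1 * (l^(-k) * Real.exp (-4)) := by ring
        _ ≤ ((N:ℝ) * l) * (l^(-k) * Real.exp (-4)) := hmm
        _ = (N:ℝ) * (l^(-k) * (l * Real.exp (-4))) := by ring
    calc ENNReal.ofReal (min (Real.exp (-4)) ((2:ℝ)^(-k) / 2) * l^(-k))
        ≤ ENNReal.ofReal (Real.exp (-4) * l^(-k)) := by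
          apply ENNReal.ofReal_le_ofReal
          exact mul_le_mul_of_nonneg_right (min_le_left _ _) (Real.rpow_nonneg h0.le _)
      _ ≤ ENNReal.ofReal (∑ n ∈ Finset.Ico N (2*N), geomTerm' k l n) :=
          ENNReal.ofReal_le_ofReal hsumlb
      _ = ∑ n ∈ Finset.Ico N (2*N), ENNReal.ofReal (geomTerm' k l n) := by
          apply ENNReal.ofReal_sum_of_nonneg
          intro i hi
          have h1' : (0:ℝ) ≤ (i:ℝ)^k := Real.rpow_nonneg (Nat.cast_nonneg _) _
          have h2' : (0:ℝ) ≤ (1-l)^(i-1) := pow_nonneg (by linarith) _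
          unfold geomTerm'; positivity
      _ ≤ ∑' n : ℕ, ENNReal.ofReal (geomTerm' k l n) := ENNReal.sum_le_tsum _
  · refine le_trans ?_ (ENNReal.le_tsum 1)
    apply ENNReal.ofReal_le_ofReal
    have h2 : geomTerm' k l 1 = l := by
      simp [geomTerm', Real.one_rpow]
    rw [h2]
    have hlk : l^(-k) ≤ (2:ℝ)^k := by
      rw [Real.rpow_neg h0.le]
      rw [show (2:ℝ)^k = ((2:ℝ)⁻¹ ^ k)⁻¹ by rw [Real.inv_rpow (by norm_num)]; simp]
      apply inv_anti₀ (Real.rpow_pos_of_pos (by norm_num) _)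
      apply Real.rpow_le_rpow (by norm_num) (by linarith) hk.le
    have h2k : (2:ℝ)^(-k) = ((2:ℝ)^k)⁻¹ := Real.rpow_neg (by norm_num) _
    have h2kpos : (0:ℝ) < (2:ℝ)^k := Real.rpow_pos_of_pos (by norm_num) _
    calc min (Real.exp (-4)) ((2:ℝ)^(-k) / 2) * l^(-k)
        ≤ ((2:ℝ)^(-k) / 2) * (2:ℝ)^k := by
          apply mul_le_mul (min_le_right _ _) hlk (Real.rpow_nonneg h0.le _) (by positivity)
      _ = 1/2 := by rw [h2k]; field_simp
      _ ≤ l := by linarith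

end AuxGeom

/-- Let `L` be a `(0,1]`-valued random variable and `X` a positive-integer
valued random variable whose conditional distribution given `L` is geometric
with success parameter `L`, i.e. `P(X = n | σ(L)) = L(1-L)^{n-1}` a.s. for all
`n ≥ 1`.  Then for any real `k > 0`, `E[X^k] = ∞ ↔ E[L^{-k}] = ∞`. -/
theorem stmt_1 {Ω : Type*} {m0 : MeasurableSpace Ω} (P : Measure Ω)
    [IsProbabilityMeasure P] (L : Ω → ℝ) (hL : Measurable L)
    (hLrange : ∀ ω, L ω ∈ Set.Ioc (0:ℝ) 1)
    (X : Ω → ℕ) (hX : Measurable X) (hXpos : ∀ ω, 1 ≤ X ω)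
    (hgeo : ∀ n : ℕ, 1 ≤ n →
      (P[(fun ω => if X ω = n then (1:ℝ) else 0) | MeasurableSpace.comap L inferInstance])
        =ᵐ[P] fun ω => L ω * (1 - L ω) ^ (n - 1))
    (k : ℝ) (hk : 0 < k) :
    (∫⁻ ω, ENNReal.ofReal ((X ω : ℝ) ^ k) ∂P = ⊤) ↔
      (∫⁻ ω, ENNReal.ofReal ((L ω) ^ (-k)) ∂P = ⊤) := by
  have hm : MeasurableSpace.comap L inferInstance ≤ m0 := hL.comap_le
  haveI : SigmaFinite (P.trim hm) := by infer_instance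
  -- Step 1: P(X = n) in terms of L
  have hprob : ∀ n : ℕ, 1 ≤ n →
      P (X ⁻¹' {n}) = ∫⁻ ω, ENNReal.ofReal (L ω * (1 - L ω)^(n-1)) ∂P := by
    intro n hn
    have hmeas : Measurable (fun ω => L ω * (1 - L ω)^(n-1)) :=
      hL.mul ((measurable_const.sub hL).pow_const _)
    have hnonneg : ∀ ω, 0 ≤ L ω * (1 - L ω)^(n-1) := fun ω => by
      have h1 := (hLrange ω).1; have h2 := (hLrange ω).2
      have : (0:ℝ) ≤ (1 - L ω)^(n-1) := pow_nonneg (by linarith) _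
      positivity
    have hint2 : Integrable (fun ω => L ω * (1 - L ω)^(n-1)) P := by
      apply (integrable_const (1:ℝ)).mono' hmeas.aestronglyMeasurable
      filter_upwards with ω
      have h1 := (hLrange ω).1; have h2 := (hLrange ω).2
      rw [Real.norm_eq_abs, abs_of_nonneg (hnonneg ω)]
      have hp1 : (1 - L ω)^(n-1) ≤ 1 := pow_le_one₀ (by linarith) (by linarith)
      nlinarith
    have h1 : ∫ ω, L ω * (1 - L ω)^(n-1) ∂P = (P (X ⁻¹' {n})).toReal := by
      rw [← integral_congr_ae (hgeo n hn), integral_condExp hm]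
      have heq : (fun ω => if X ω = n then (1:ℝ) else 0)
          = (X ⁻¹' {n}).indicator (fun _ => (1:ℝ)) := by
        funext ω
        by_cases h : X ω = n <;> simp [Set.indicator_apply, Set.mem_preimage, h]
      rw [heq, integral_indicator_const (1:ℝ) (hX (measurableSet_singleton n)),
        smul_eq_mul, mul_one, measureReal_def]
    calc P (X ⁻¹' {n}) = ENNReal.ofReal (∫ ω, L ω * (1 - L ω)^(n-1) ∂P) := by
          rw [h1, ENNReal.ofReal_toReal (measure_ne_top P _)]
      _ = ∫⁻ ω, ENNReal.ofReal (L ω * (1 - L ω)^(n-1)) ∂P :=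
          ofReal_integral_eq_lintegral_ofReal hint2 (Filter.Eventually.of_forall hnonneg)
  -- Step 2: expand E[X^k] as a sum
  have hXcomp : ∫⁻ ω, ENNReal.ofReal ((X ω : ℝ)^k) ∂P
      = ∑' n : ℕ, ENNReal.ofReal ((n:ℝ)^k) * P (X ⁻¹' {n}) := by
    have hfm : Measurable (fun n : ℕ => ENNReal.ofReal ((n:ℝ)^k)) := measurable_from_nat
    rw [← lintegral_map hfm hX, lintegral_countable']
    exact tsum_congr fun n => by rw [Measure.map_apply hX (measurableSet_singleton n)]
  -- Step 3: swap sum and integral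
  have hGmeas : ∀ n : ℕ, Measurable (fun ω => ENNReal.ofReal (geomTerm' k (L ω) n)) := by
    intro n
    apply ENNReal.measurable_ofReal.comp
    exact measurable_const.mul (hL.mul ((measurable_const.sub hL).pow_const _))
  have hswap : ∑' n : ℕ, ENNReal.ofReal ((n:ℝ)^k) * P (X ⁻¹' {n})
      = ∫⁻ ω, ∑' n : ℕ, ENNReal.ofReal (geomTerm' k (L ω) n) ∂P := by
    rw [lintegral_tsum fun n => (hGmeas n).aemeasurable]
    refine tsum_congr fun n => ?_
    rcases Nat.eq_zero_or_pos n with rfl | hn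
    · simp [geomTerm', Real.zero_rpow hk.ne']
    · rw [hprob n hn, ← lintegral_const_mul' _ _ ENNReal.ofReal_ne_top]
      refine lintegral_congr fun ω => ?_
      rw [← ENNReal.ofReal_mul (Real.rpow_nonneg (Nat.cast_nonneg n) _)]
      rfl
  -- Step 4: squeeze
  obtain ⟨C, hC, hup⟩ := geom_upper' hk
  obtain ⟨c, hc, hlow⟩ := geom_lower' hk
  have hIub : ∫⁻ ω, (∑' n : ℕ, ENNReal.ofReal (geomTerm' k (L ω) n)) ∂P
      ≤ ENNReal.ofReal C * ∫⁻ ω, ENNReal.ofReal ((L ω)^(-k)) ∂P := by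
    rw [← lintegral_const_mul' _ _ ENNReal.ofReal_ne_top]
    refine lintegral_mono fun ω => (hup (L ω) (hLrange ω)).trans ?_
    rw [ENNReal.ofReal_mul hC.le]
  have hIlb : ENNReal.ofReal c * ∫⁻ ω, ENNReal.ofReal ((L ω)^(-k)) ∂P
      ≤ ∫⁻ ω, (∑' n : ℕ, ENNReal.ofReal (geomTerm' k (L ω) n)) ∂P := by
    rw [← lintegral_const_mul' _ _ ENNReal.ofReal_ne_top]
    refine lintegral_mono fun ω => ?_
    rw [← ENNReal.ofReal_mul hc.le]
    exact hlow (L ω) (hLrange ω)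
  rw [hXcomp, hswap]
  constructor
  · intro h
    by_contra hI
    have hfin : ENNReal.ofReal C * ∫⁻ ω, ENNReal.ofReal ((L ω)^(-k)) ∂P ≠ ⊤ :=
      ENNReal.mul_ne_top ENNReal.ofReal_ne_top hI
    exact hfin (top_le_iff.mp (h ▸ hIub))
  · intro h
    rw [h] at hIlb
    rw [ENNReal.mul_top (ENNReal.ofReal_pos.mpr hc).ne'] at hIlb
    exact top_le_iff.mp hIlb
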